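/- arXiv:2104.13851 — 10 statements merged into one kernel-verified Lean document; each statement's English description precedes it below -/
import Mathlib

section
/- Fix a rank-k hypergraph E (∅ ∉ E, E finite, and every e ∈ E is finite with |e| ≤ k). Define invar C F = (F ⊆ E ∧ C is a vertex cover of E − F ∧ C is finite ∧ there exists M with M a matching, M ⊆ E, |C| ≤ k·|M|, and e ∩ f = ∅ for all e ∈ M, f ∈ F). Then for any e ∈ F, if F ≠ ∅ and invar C F holds, then invar (C ∪ e) (F − {e′ ∈ F | e ∩ e′ ≠ ∅}) holds. -/
/-- A vertex cover of a hypergraph `E`: a set of vertices intersecting every edge. -/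
def vc {α : Type*} (E : Set (Set α)) (C : Set α) : Prop := ∀ e ∈ E, e ∩ C ≠ ∅

/-- A matching: a set of pairwise disjoint sets. -/
def matching {α : Type*} (M : Set (Set α)) : Prop :=
  ∀ e ∈ M, ∀ f ∈ M, e ≠ f → e ∩ f = ∅

def inv_matching {α : Type*} (k : ℕ) (E : Set (Set α)) (C : Set α)
    (F M : Set (Set α)) : Prop :=
  matching M ∧ M ⊆ E ∧ C.ncard ≤ k * M.ncard ∧ ∀ e ∈ M, ∀ f ∈ F, e ∩ f = ∅

def invar {α : Type*} (k : ℕ) (E : Set (Set α)) (C : Set α) (F : Set (Set α)) : Prop :=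
  F ⊆ E ∧ vc (E \ F) C ∧ C.Finite ∧ ∃ M, inv_matching k E C F M

theorem stmt_1 {α : Type*} (k : ℕ) (E : Set (Set α))
    (hE₁ : ∅ ∉ E) (hE₂ : E.Finite) (hE₃ : ∀ e ∈ E, e.Finite ∧ e.ncard ≤ k)
    (C : Set α) (F : Set (Set α)) (e : Set α) (heF : e ∈ F)
    (hF : F ≠ ∅) (hinv : invar k E C F) :
    invar k E (C ∪ e) (F \ {e' ∈ F | e ∩ e' ≠ ∅}) := by
  obtain ⟨hFE, hvc, hCfin, M, hM, hME, hcard, hdisj⟩ := hinv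
  have heE : e ∈ E := hFE heF
  have hene : e ≠ ∅ := fun h => hE₁ (h ▸ heE)
  have heM : e ∉ M := fun h => hene (by simpa [Set.inter_self] using hdisj e h e heF)
  have hMfin : M.Finite := hE₂.subset hME
  have hefin : e.Finite := (hE₃ e heE).1
  refine ⟨(Set.diff_subset).trans hFE, ?_, hCfin.union hefin, insert e M, ?_, ?_, ?_, ?_⟩
  · intro f hf
    obtain ⟨hfE, hfF⟩ := hf
    by_cases hfF' : f ∈ F
    · have hne : e ∩ f ≠ ∅ := by
        intro h
        exact hfF ⟨hfF', fun hs => hs.2 h⟩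
      intro h
      apply hne
      rw [Set.eq_empty_iff_forall_notMem] at h ⊢
      intro x hx
      exact h x ⟨hx.2, Or.inr hx.1⟩
    · have := hvc f ⟨hfE, hfF'⟩
      intro h
      apply this
      rw [Set.eq_empty_iff_forall_notMem] at h ⊢
      intro x hx
      exact h x ⟨hx.1, Or.inl hx.2⟩
  · intro a ha b hb hab
    rcases ha with rfl | ha
    · rcases hb with rfl | hb
      · exact absurd rfl hab
      · rw [Set.inter_comm]; exact hdisj b hb a heF
    · rcases hb with rfl | hb
      · exact hdisj a ha b heF
      · exact hM a ha b hb hab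
  · exact Set.insert_subset heE hME
  · have h1 : (C ∪ e).ncard ≤ C.ncard + e.ncard :=
      Set.ncard_union_le C e
    have h2 : (insert e M).ncard = M.ncard + 1 :=
      Set.ncard_insert_of_notMem heM hMfin
    calc (C ∪ e).ncard ≤ C.ncard + e.ncard := h1
      _ ≤ k * M.ncard + k := add_le_add hcard (hE₃ e heE).2
      _ = k * (M.ncard + 1) := by ring
      _ = k * (insert e M).ncard := by rw [h2]
  · intro a ha f hf
    simp only [Set.mem_diff, Set.mem_setOf_eq, not_and, not_not] at hf
    rcases ha with rfl | ha
    · exact hf.2 hf.1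
    · exact hdisj a ha f hf.1
end

section
/- Fix a rank-k hypergraph E (∅ ∉ E, E finite, and every e ∈ E is finite with |e| ≤ k). Define invar C F = (F ⊆ E ∧ C is a vertex cover of E − F ∧ C is finite ∧ there exists M with M a matching, M ⊆ E, |C| ≤ k·|M|, and e ∩ f = ∅ for all e ∈ M, f ∈ F). If invar C ∅ holds, then C is a vertex cover of E and for every finite vertex cover C′ of E one has |C| ≤ k·|C′|. -/
theorem stmt_2 {α : Type*} (k : ℕ) (E : Set (Set α))
    (hE₁ : ∅ ∉ E) (hE₂ : E.Finite) (hE₃ : ∀ e ∈ E, e.Finite ∧ e.ncard ≤ k)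
    (C : Set α) (hinv : invar k E C ∅) :
    vc E C ∧ ∀ C' : Set α, C'.Finite → vc E C' → C.ncard ≤ k * C'.ncard := by
  obtain ⟨-, hcov, -, M, hM, hME, hcard, -⟩ := hinv
  have hvcE : vc E C := by
    intro e he
    exact hcov e ⟨he, by simp⟩
  refine ⟨hvcE, fun C' hC'fin hC'vc => ?_⟩
  -- choose for each e ∈ M a vertex in e ∩ C'
  have hchoice : ∀ e ∈ M, ∃ x, x ∈ e ∩ C' := by
    intro e he
    have := hC'vc e (hME he)
    exact Set.nonempty_iff_ne_empty.mpr this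
  choose f hf using hchoice
  have hMle : M.ncard ≤ C'.ncard := by
    rcases M.eq_empty_or_nonempty with hMe | ⟨e0, he0⟩
    · simp [hMe]
    have : Nonempty α := ⟨f e0 he0⟩
    classical
    refine Set.ncard_le_ncard_of_injOn (fun e => if h : e ∈ M then f e h else Classical.arbitrary α) ?_ ?_ hC'fin
    · intro e he
      simp only [dif_pos he]
      exact (hf e he).2
    · intro e he g hg heq
      simp only [dif_pos he, dif_pos hg] at heq
      by_contra hne
      have := hM e he g hg hne
      have h1 : f e he ∈ e ∩ g := ⟨(hf e he).1, heq ▸ (hf g hg).1⟩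
      rw [this] at h1
      exact h1
  calc C.ncard ≤ k * M.ncard := hcard
    _ ≤ k * C'.ncard := Nat.mul_le_mul_left k hMle
end

section
/- Fix a finite graph E whose edges are all 2-element sets, with vertex set V = ⋃E, neighbors x = {y | {x,y} ∈ E}, and maximum degree Δ. Define inv_iv S X = (S is an independent set of E ∧ X ⊆ V ∧ (∀v₁ ∈ V − X, ∀v₂ ∈ S, {v₁,v₂} ∉ E) ∧ S ⊆ X), and inv_partition S X P = (inv_iv S X ∧ ⋃P = X ∧ (∀p ∈ P, ∃s ∈ V, p = {s} ∪ neighbors s) ∧ |P| = |S| ∧ P finite). If inv_partition S V P holds, then every independent set S′ of E satisfies |S′| ≤ |S| · Δ. -/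
/-- The neighbors of a vertex `x` in the graph `E`. -/
def nbrs {α : Type*} (E : Set (Set α)) (x : α) : Set α := {y | {x, y} ∈ E}

/-- The maximum degree of the graph `E`. -/
noncomputable def maxDeg {α : Type*} (E : Set (Set α)) : ℕ :=
  sSup ((fun v => (nbrs E v).ncard) '' ⋃₀ E)

/-- `S` is an independent set of the graph `E`. -/
def iv {α : Type*} (E : Set (Set α)) (S : Set α) : Prop :=
  S ⊆ ⋃₀ E ∧ ∀ v₁ v₂, v₁ ∈ S → v₂ ∈ S → ({v₁, v₂} : Set α) ∉ E

def inv_iv {α : Type*} (E : Set (Set α)) (S X : Set α) : Prop :=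
  iv E S ∧ X ⊆ ⋃₀ E ∧ (∀ v₁ ∈ (⋃₀ E) \ X, ∀ v₂ ∈ S, ({v₁, v₂} : Set α) ∉ E) ∧ S ⊆ X

def inv_partition {α : Type*} (E : Set (Set α)) (S X : Set α) (P : Set (Set α)) : Prop :=
  inv_iv E S X ∧ ⋃₀ P = X ∧ (∀ p ∈ P, ∃ s ∈ ⋃₀ E, p = {s} ∪ nbrs E s) ∧
    P.ncard = S.ncard ∧ P.Finite

lemma sUnion_bound {α : Type*} (S' : Set α) (D : ℕ) :
    ∀ P : Set (Set α), P.Finite → (∀ p ∈ P, (S' ∩ p).ncard ≤ D) →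
      (S' ∩ ⋃₀ P).ncard ≤ P.ncard * D := by
  intro P hP
  refine Set.Finite.induction_on P hP (motive := fun P _ =>
    (∀ p ∈ P, (S' ∩ p).ncard ≤ D) → (S' ∩ ⋃₀ P).ncard ≤ P.ncard * D) (by simp) ?_
  intro p P hpP hPfin ih hb
  have h1 : S' ∩ ⋃₀ insert p P = (S' ∩ p) ∪ (S' ∩ ⋃₀ P) := by
    rw [Set.sUnion_insert, Set.inter_union_distrib_left]
  rw [h1]
  calc ((S' ∩ p) ∪ (S' ∩ ⋃₀ P)).ncard ≤ (S' ∩ p).ncard + (S' ∩ ⋃₀ P).ncard :=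
        Set.ncard_union_le _ _
    _ ≤ D + P.ncard * D :=
        Nat.add_le_add (hb p (Set.mem_insert _ _))
          (ih fun q hq => hb q (Set.mem_insert_of_mem _ hq))
    _ = (P.ncard + 1) * D := by ring
    _ = (insert p P).ncard * D := by
        rw [Set.ncard_insert_of_notMem hpP hPfin]

theorem stmt_4 {α : Type*} (E : Set (Set α))
    (hE : E.Finite) (hE₂ : ∀ e ∈ E, e.ncard = 2)
    (S : Set α) (P : Set (Set α))
    (h : inv_partition E S (⋃₀ E) P) :
    ∀ S' : Set α, iv E S' → S'.ncard ≤ S.ncard * maxDeg E := by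
  intro S' hS'
  obtain ⟨hiv, hUP, hshape, hcard, hPfin⟩ := h
  have hVfin : (⋃₀ E).Finite :=
    hE.sUnion fun e he => Set.finite_of_ncard_ne_zero (by rw [hE₂ e he]; norm_num)
  have hnbrs_sub : ∀ s, nbrs E s ⊆ ⋃₀ E := by
    intro s y hy
    exact ⟨{s, y}, hy, by simp⟩
  have hbdd : BddAbove ((fun v => (nbrs E v).ncard) '' ⋃₀ E) :=
    (hVfin.image _).bddAbove
  have hdeg_le : ∀ s ∈ ⋃₀ E, (nbrs E s).ncard ≤ maxDeg E := fun s hs =>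
    le_csSup hbdd ⟨s, hs, rfl⟩
  -- maxDeg ≥ 1 whenever some vertex exists
  have hΔ1 : ∀ s ∈ ⋃₀ E, 1 ≤ maxDeg E := by
    rintro s ⟨e, he, hse⟩
    have h2 := hE₂ e he
    have hefin : e.Finite := Set.finite_of_ncard_ne_zero (by rw [h2]; norm_num)
    obtain ⟨y, hy, hys⟩ : ∃ y ∈ e, y ≠ s := by
      by_contra hc
      push_neg at hc
      have : e ⊆ {s} := fun z hz => hc z hz
      have := Set.ncard_le_ncard this (Set.finite_singleton s)
      rw [h2, Set.ncard_singleton] at this; omega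
    have hyn : y ∈ nbrs E s := by
      have : ({s, y} : Set α) = e := by
        apply Set.eq_of_subset_of_ncard_le
        · intro z hz; rcases hz with rfl | rfl; exact hse; exact hy
        · rw [h2]; exact le_of_eq (Set.ncard_pair hys.symm).symm
        · exact hefin
      rw [nbrs, Set.mem_setOf_eq, this]; exact he
    have : 1 ≤ (nbrs E s).ncard :=
      (Set.ncard_pos (hVfin.subset (hnbrs_sub s))).mpr ⟨y, hyn⟩
    exact this.trans (hdeg_le s ⟨e, he, hse⟩)
  -- each piece intersects S' in ≤ Δ elements
  have hpiece : ∀ p ∈ P, (S' ∩ p).ncard ≤ maxDeg E := by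
    intro p hp
    obtain ⟨s, hsV, rfl⟩ := hshape p hp
    by_cases hsS' : s ∈ S'
    · have hsub : S' ∩ ({s} ∪ nbrs E s) ⊆ {s} := by
        rintro z ⟨hzS', hz | hz⟩
        · exact hz
        · exact absurd hz (fun hzn => hS'.2 s z hsS' hzS' hzn)
      calc (S' ∩ ({s} ∪ nbrs E s)).ncard ≤ ({s} : Set α).ncard :=
            Set.ncard_le_ncard hsub (Set.finite_singleton s)
        _ = 1 := Set.ncard_singleton s
        _ ≤ maxDeg E := hΔ1 s hsV
    · have hsub : S' ∩ ({s} ∪ nbrs E s) ⊆ nbrs E s := by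
        rintro z ⟨hzS', hz | hz⟩
        · exact absurd (hz ▸ hzS') hsS'
        · exact hz
      exact (Set.ncard_le_ncard hsub (hVfin.subset (hnbrs_sub s))).trans (hdeg_le s hsV)
  have hS'sub : S' = S' ∩ ⋃₀ P := by
    rw [hUP]; exact (Set.inter_eq_left.mpr hS'.1).symm
  calc S'.ncard = (S' ∩ ⋃₀ P).ncard := by rw [← hS'sub]
    _ ≤ P.ncard * maxDeg E := sUnion_bound S' (maxDeg E) P hPfin hpiece
    _ = S.ncard * maxDeg E := by rw [hcard]
end

section
/- Fix m > 0 machines, n jobs, and job loads t : ℕ → ℕ. If lb T A j holds and x ∈ {1..m}, then lb (T with T x updated to T x + t (j+1)) (A with A x updated to A x ∪ {j+1}) (j+1) holds. -/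
/-- `lb m t T A j`: `(T, A)` is a partial solution distributing jobs `{1..j}`
on machines `{1..m}`, with `T x` the total load on machine `x`. -/
def lb (m : ℕ) (t : ℕ → ℕ) (T : ℕ → ℕ) (A : ℕ → Finset ℕ) (j : ℕ) : Prop :=
  (∀ x ∈ Finset.Icc 1 m, ∀ y ∈ Finset.Icc 1 m, x ≠ y → A x ∩ A y = ∅) ∧
  (Finset.Icc 1 m).biUnion A = Finset.Icc 1 j ∧
  (∀ x ∈ Finset.Icc 1 m, ∑ y ∈ A x, t y = T x)

theorem stmt_6 (m n : ℕ) (hm : 0 < m) (t : ℕ → ℕ)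
    (T : ℕ → ℕ) (A : ℕ → Finset ℕ) (j : ℕ) (hlb : lb m t T A j)
    (x : ℕ) (hx : x ∈ Finset.Icc 1 m) :
    lb m t (Function.update T x (T x + t (j + 1)))
      (Function.update A x (insert (j + 1) (A x))) (j + 1) := by
  obtain ⟨hdisj, hun, hsum⟩ := hlb
  have hnew : ∀ y ∈ Finset.Icc 1 m, (j + 1) ∉ A y := by
    intro y hy hmem
    have : (j + 1) ∈ (Finset.Icc 1 m).biUnion A := Finset.mem_biUnion.2 ⟨y, hy, hmem⟩
    rw [hun, Finset.mem_Icc] at this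
    omega
  refine ⟨?_, ?_, ?_⟩
  · intro a ha b hb hab
    rcases eq_or_ne a x with rfl | hax
    · rw [Function.update_self, Function.update_of_ne (Ne.symm hab)]
      rw [Finset.insert_inter_of_notMem (hnew b hb)]
      exact hdisj a ha b hb hab
    · rw [Function.update_of_ne hax]
      rcases eq_or_ne b x with rfl | hbx
      · rw [Function.update_self, Finset.inter_insert_of_notMem (hnew a ha)]
        exact hdisj a ha b hb hab
      · rw [Function.update_of_ne hbx]; exact hdisj a ha b hb hab
  · ext z
    simp only [Finset.mem_biUnion, Finset.mem_Icc]
    constructor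
    · rintro ⟨y, hy, hz⟩
      rcases eq_or_ne y x with rfl | hyx
      · rw [Function.update_self, Finset.mem_insert] at hz
        rcases hz with rfl | hz
        · omega
        · have : z ∈ (Finset.Icc 1 m).biUnion A := Finset.mem_biUnion.2 ⟨y, Finset.mem_Icc.2 hy, hz⟩
          rw [hun, Finset.mem_Icc] at this; omega
      · rw [Function.update_of_ne hyx] at hz
        have : z ∈ (Finset.Icc 1 m).biUnion A := Finset.mem_biUnion.2 ⟨y, Finset.mem_Icc.2 hy, hz⟩
        rw [hun, Finset.mem_Icc] at this; omega
    · rintro ⟨h1, h2⟩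
      rcases eq_or_ne z (j + 1) with rfl | hz
      · exact ⟨x, Finset.mem_Icc.1 hx, by rw [Function.update_self]; exact Finset.mem_insert_self _ _⟩
      · have : z ∈ (Finset.Icc 1 m).biUnion A := by rw [hun, Finset.mem_Icc]; omega
        obtain ⟨y, hy, hzy⟩ := Finset.mem_biUnion.1 this
        refine ⟨y, Finset.mem_Icc.1 hy, ?_⟩
        rcases eq_or_ne y x with rfl | hyx
        · rw [Function.update_self]; exact Finset.mem_insert_of_mem hzy
        · rwa [Function.update_of_ne hyx]
  · intro a ha
    rcases eq_or_ne a x with rfl | hax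
    · rw [Function.update_self, Function.update_self,
        Finset.sum_insert (hnew a ha), ← hsum a ha]
      ring
    · rw [Function.update_of_ne hax, Function.update_of_ne hax]
      exact hsum a ha
end

section
/- Fix m > 0 machines, n jobs, and job loads t : ℕ → ℕ. If lb T A j holds, then (∑_{x=1}^{j} t x) / m ≤ makespan T (as real numbers). -/
/-- The makespan: the maximum load over the machines `{1..m}`. -/
def makespan (m : ℕ) (T : ℕ → ℕ) : ℕ := (Finset.Icc 1 m).sup T

theorem stmt_7 (m n : ℕ) (hm : 0 < m) (t : ℕ → ℕ)
    (T : ℕ → ℕ) (A : ℕ → Finset ℕ) (j : ℕ) (hlb : lb m t T A j) :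
    ((∑ x ∈ Finset.Icc 1 j, t x : ℕ) : ℝ) / (m : ℝ) ≤ (makespan m T : ℝ) := by
  obtain ⟨hdisj, hcov, hsum⟩ := hlb
  have key : ∑ x ∈ Finset.Icc 1 j, t x ≤ m * makespan m T := by
    rw [← hcov, Finset.sum_biUnion (fun x hx y hy hxy => by
      simpa [Finset.disjoint_iff_inter_eq_empty] using hdisj x hx y hy hxy)]
    calc ∑ x ∈ Finset.Icc 1 m, ∑ y ∈ A x, t y
        ≤ ∑ x ∈ Finset.Icc 1 m, makespan m T := by
          apply Finset.sum_le_sum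
          intro x hx
          rw [hsum x hx]
          exact Finset.le_sup hx
      _ = m * makespan m T := by
          rw [Finset.sum_const, Nat.card_Icc]
          simp [Nat.mul_comm]
  rw [div_le_iff₀ (by positivity)]
  calc ((∑ x ∈ Finset.Icc 1 j, t x : ℕ) : ℝ) ≤ ((m * makespan m T : ℕ) : ℝ) := by
        exact_mod_cast key
    _ = (makespan m T : ℝ) * m := by push_cast; ring
end

section
/- Fix m > 0 machines, n jobs, and job loads t : ℕ → ℕ. If lb T A j holds, then Max₀ (t '' {1..j}) ≤ makespan T, where Max₀ denotes the maximum of a finite set of naturals, taken to be 0 for the empty set. -/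
theorem stmt_8 (m n : ℕ) (hm : 0 < m) (t : ℕ → ℕ)
    (T : ℕ → ℕ) (A : ℕ → Finset ℕ) (j : ℕ) (hlb : lb m t T A j) :
    ((Finset.Icc 1 j).image t).sup id ≤ makespan m T := by
  obtain ⟨hdisj, hunion, hsum⟩ := hlb
  apply Finset.sup_le
  intro v hv
  obtain ⟨y, hy, rfl⟩ := Finset.mem_image.mp hv
  rw [← hunion] at hy
  obtain ⟨x, hx, hyx⟩ := Finset.mem_biUnion.mp hy
  calc id (t y) ≤ ∑ z ∈ A x, t z := Finset.single_le_sum (fun _ _ => Nat.zero_le _) hyx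
    _ = T x := hsum x hx
    _ ≤ makespan m T := Finset.le_sup hx
end

section
/- Fix m > 0 machines, n jobs, and job loads t : ℕ → ℕ. If lb T A j holds, m < j, and sorted j holds (i.e., t x ≤ t y for all x ∈ {1..j} and y ∈ {1..x}), then 2 · t j ≤ makespan T. -/
/-- The job loads `t` are sorted in descending order up to job `j`. -/
def sorted (t : ℕ → ℕ) (j : ℕ) : Prop :=
  ∀ x ∈ Finset.Icc 1 j, ∀ y ∈ Finset.Icc 1 x, t x ≤ t y

theorem stmt_9 (m n : ℕ) (hm : 0 < m) (t : ℕ → ℕ)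
    (T : ℕ → ℕ) (A : ℕ → Finset ℕ) (j : ℕ) (hlb : lb m t T A j)
    (hmj : m < j) (hsorted : sorted t j) :
    2 * t j ≤ makespan m T := by
  classical
  obtain ⟨hdisj, hcover, hsum⟩ := hlb
  -- Every job k in {1..m+1} is on some machine
  have hmem : ∀ k ∈ Finset.Icc 1 (m + 1), ∃ x ∈ Finset.Icc 1 m, k ∈ A x := by
    intro k hk
    have hk' : k ∈ Finset.Icc 1 j := by
      simp only [Finset.mem_Icc] at hk ⊢
      omega
    rw [← hcover] at hk'
    simpa using Finset.mem_biUnion.mp hk'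
  choose f hf1 hf2 using hmem
  -- pigeonhole: two distinct jobs on same machine
  have hcard : (Finset.Icc 1 m).card < (Finset.Icc 1 (m + 1)).attach.card := by
    simp [Nat.card_Icc]
  have hmaps : ∀ k ∈ (Finset.Icc 1 (m + 1)).attach,
      f k.1 k.2 ∈ Finset.Icc 1 m := fun k _ => hf1 k.1 k.2
  obtain ⟨a, _, b, _, hab, heq⟩ :=
    Finset.exists_ne_map_eq_of_card_lt_of_maps_to hcard hmaps
  set x := f a.1 a.2 with hx
  have hbx : b.1 ∈ A x := heq ▸ hf2 b.1 b.2
  have hax : a.1 ∈ A x := hf2 a.1 a.2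
  have hne : a.1 ≠ b.1 := fun h => hab (Subtype.ext h)
  have hxm : x ∈ Finset.Icc 1 m := hf1 a.1 a.2
  -- each of a, b has load ≥ t j
  have hta : t j ≤ t a.1 := by
    apply hsorted j (by simp [Finset.mem_Icc]; omega)
    have := a.2; simp only [Finset.mem_Icc] at this ⊢; omega
  have htb : t j ≤ t b.1 := by
    apply hsorted j (by simp [Finset.mem_Icc]; omega)
    have := b.2; simp only [Finset.mem_Icc] at this ⊢; omega
  have hsub : ({a.1, b.1} : Finset ℕ) ⊆ A x := by
    intro y hy
    simp only [Finset.mem_insert, Finset.mem_singleton] at hy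
    rcases hy with rfl | rfl <;> assumption
  have hle : 2 * t j ≤ ∑ y ∈ A x, t y := by
    calc 2 * t j = t j + t j := by ring
    _ ≤ t a.1 + t b.1 := Nat.add_le_add hta htb
    _ = ∑ y ∈ ({a.1, b.1} : Finset ℕ), t y := by
        rw [Finset.sum_pair hne]
    _ ≤ ∑ y ∈ A x, t y := Finset.sum_le_sum_of_subset hsub
  calc 2 * t j ≤ T x := by rw [← hsum x hxm]; exact hle
  _ ≤ makespan m T := Finset.le_sup hxm
end

section
/- Let S be a finite nonempty set of sites in a metric space, and for a finite nonempty set of centers C′ define radius C′ = Max {distance C′ s | s ∈ S} where distance C′ s = Min {dist s c | c ∈ C′}. Let C be a finite set with |C| > n and C ⊆ S such that dist c₁ c₂ > 2r for all distinct c₁, c₂ ∈ C. Then every finite set C′ with 0 < |C′| ≤ n satisfies radius C′ > r. -/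
/-- The distance from a point `s` to the nearest center in `C`
(the minimum of `dist s c` over `c ∈ C`, for `C` finite and nonempty). -/
noncomputable def distanceTo {α : Type*} [MetricSpace α] (C : Set α) (s : α) : ℝ :=
  sInf ((fun c => dist s c) '' C)

/-- The radius of a set of centers `C'` w.r.t. the sites `S`
(the maximum over `s ∈ S` of the distance from `s` to `C'`). -/
noncomputable def radius {α : Type*} [MetricSpace α] (S C' : Set α) : ℝ :=
  sSup ((fun s => distanceTo C' s) '' S)

theorem stmt_14 {α : Type*} [MetricSpace α] (S : Set α)
    (hSfin : S.Finite) (hSne : S.Nonempty)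
    (C : Set α) (n : ℕ) (r : ℝ)
    (hCfin : C.Finite) (hCcard : n < C.ncard) (hCS : C ⊆ S)
    (hsep : ∀ c₁ ∈ C, ∀ c₂ ∈ C, c₁ ≠ c₂ → 2 * r < dist c₁ c₂) :
    ∀ C' : Set α, C'.Finite → 0 < C'.ncard → C'.ncard ≤ n → r < radius S C' := by
  intro C' hC'fin hC'pos hC'le
  have hC'ne : C'.Nonempty := Set.nonempty_of_ncard_ne_zero hC'pos.ne'
  have hnear : ∀ s : α, ∃ c' ∈ C', dist s c' = distanceTo C' s := by
    intro s
    have hfin : ((fun c => dist s c) '' C').Finite := hC'fin.image _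
    have hne : ((fun c => dist s c) '' C').Nonempty := hC'ne.image _
    obtain ⟨c', hc', h⟩ := hne.csInf_mem hfin
    exact ⟨c', hc', h⟩
  choose f hf1 hf2 using hnear
  have hcard : hC'fin.toFinset.card < hCfin.toFinset.card := by
    rw [← Set.ncard_eq_toFinset_card C hCfin, ← Set.ncard_eq_toFinset_card C' hC'fin]
    omega
  obtain ⟨c₁, hc₁, c₂, hc₂, hne, hfeq⟩ :=
    Finset.exists_ne_map_eq_of_card_lt_of_maps_to hcard
      (fun c hc => (hC'fin.mem_toFinset).2 (hf1 c))
  rw [hCfin.mem_toFinset] at hc₁ hc₂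
  have htri : dist c₁ c₂ ≤ dist c₁ (f c₁) + dist c₂ (f c₂) := by
    calc dist c₁ c₂ ≤ dist c₁ (f c₁) + dist (f c₁) c₂ := dist_triangle _ _ _
    _ = dist c₁ (f c₁) + dist c₂ (f c₂) := by rw [hfeq, dist_comm c₂ (f c₂)]
  have hsep' := hsep c₁ hc₁ c₂ hc₂ hne
  have hrad : ∀ s ∈ S, distanceTo C' s ≤ radius S C' := fun s hs =>
    le_csSup (hSfin.image _).bddAbove ⟨s, hs, rfl⟩
  have h1 := hrad c₁ (hCS hc₁)
  have h2 := hrad c₂ (hCS hc₂)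
  rw [← hf2 c₁] at h1
  rw [← hf2 c₂] at h2
  linarith
end

section
/- Let U be a finite set with U = ⋃_{i ∈ {1..m}} S i, where S : ℕ → set of elements and w : ℕ → ℝ assigns a weight w i ≥ 0 to each index. Suppose sc C U holds (C ⊆ {1..m} and ⋃_{i ∈ C} S i = U), and there exists a cost function c with: W C = ∑_{s ∈ U} c s, c s ≥ 0 for all s, and ∑_{s ∈ S k} c s ≤ H(|S k|) · w k for every k ∈ {1..m}. Then for every C′ with sc C′ U, W C ≤ H(d*) · W C′, where d* = max over k ∈ {1..m} of |S k| and H is the harmonic number function. -/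
/-- `sc m S C U`: `C` is a set cover of `U` using subsets indexed by `{1..m}`. -/
def sc {α : Type*} [DecidableEq α] (m : ℕ) (S : ℕ → Finset α) (C : Finset ℕ)
    (U : Finset α) : Prop :=
  C ⊆ Finset.Icc 1 m ∧ C.biUnion S = U

/-- The `n`-th harmonic number. -/
noncomputable def H (n : ℕ) : ℝ := ∑ j ∈ Finset.Icc 1 n, (1 : ℝ) / j

lemma H_nonneg (n : ℕ) : 0 ≤ H n :=
  Finset.sum_nonneg fun j _ => by positivity

lemma H_mono {a b : ℕ} (h : a ≤ b) : H a ≤ H b :=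
  Finset.sum_le_sum_of_subset_of_nonneg
    (Finset.Icc_subset_Icc_right h) (fun j _ _ => by positivity)

lemma sum_biUnion_le {α : Type*} [DecidableEq α] (c : α → ℝ) (hc : ∀ s, 0 ≤ c s)
    (s : Finset ℕ) (S : ℕ → Finset α) :
    ∑ x ∈ s.biUnion S, c x ≤ ∑ i ∈ s, ∑ x ∈ S i, c x := by
  classical
  refine Finset.induction_on s (by simp) ?_
  intro a t ha ih
  rw [Finset.biUnion_insert, Finset.sum_insert ha]
  have h1 : ∑ x ∈ S a ∪ t.biUnion S, c x + ∑ x ∈ S a ∩ t.biUnion S, c x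
      = ∑ x ∈ S a, c x + ∑ x ∈ t.biUnion S, c x := Finset.sum_union_inter
  have h2 : 0 ≤ ∑ x ∈ S a ∩ t.biUnion S, c x := Finset.sum_nonneg fun x _ => hc x
  linarith [ih]

theorem stmt_17 {α : Type*} [DecidableEq α]
    (m : ℕ) (U : Finset α) (S : ℕ → Finset α) (w : ℕ → ℝ)
    (hU : (Finset.Icc 1 m).biUnion S = U)
    (hw : ∀ i ∈ Finset.Icc 1 m, 0 ≤ w i)
    (C : Finset ℕ) (hC : sc m S C U)
    (c : α → ℝ)
    (hc₁ : ∑ i ∈ C, w i = ∑ s ∈ U, c s)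
    (hc₂ : ∀ s, 0 ≤ c s)
    (hc₃ : ∀ k ∈ Finset.Icc 1 m, ∑ s ∈ S k, c s ≤ H (S k).card * w k) :
    ∀ C' : Finset ℕ, sc m S C' U →
      ∑ i ∈ C, w i ≤ H ((Finset.Icc 1 m).sup fun k => (S k).card) * ∑ i ∈ C', w i := by
  intro C' hC'
  obtain ⟨hC'sub, hC'cov⟩ := hC'
  set d := (Finset.Icc 1 m).sup fun k => (S k).card with hd
  calc ∑ i ∈ C, w i = ∑ s ∈ U, c s := hc₁
    _ = ∑ s ∈ C'.biUnion S, c s := by rw [hC'cov]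
    _ ≤ ∑ k ∈ C', ∑ s ∈ S k, c s := sum_biUnion_le c hc₂ C' S
    _ ≤ ∑ k ∈ C', H (S k).card * w k := by
        apply Finset.sum_le_sum
        intro k hk
        exact hc₃ k (hC'sub hk)
    _ ≤ ∑ k ∈ C', H d * w k := by
        apply Finset.sum_le_sum
        intro k hk
        exact mul_le_mul_of_nonneg_right
          (H_mono (Finset.le_sup (f := fun k => (S k).card) (hC'sub hk))) (hw k (hC'sub hk))
    _ = H d * ∑ i ∈ C', w i := (Finset.mul_sum _ _ _).symm
end

section
/- Let U be a finite nonempty set of objects with weights w : α → ℝ satisfying 0 < w u ≤ c for all u ∈ U, where c > 0 is the bin capacity, and let P be a bin packing of U (P is a partition of U with ∑_{u ∈ B} w u ≤ c for every B ∈ P). Let P₁ be a finite set of pairwise disjoint nonempty subsets of U, let V′ ⊆ U with V′ ∩ ⋃P₁ = ∅, and let f be a bijection from P₁ onto V′ such that c < W B + w (f B) for every B ∈ P₁, where W B = ∑_{u ∈ B} w u. Then |P₁| + 1 ≤ |P|. -/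
/-- `bp U w c P`: `P` is a bin packing of `U`, i.e. a partition of `U`
into bins each of weight at most `c`. -/
def bp {α : Type*} [DecidableEq α] (U : Finset α) (w : α → ℝ) (c : ℝ)
    (P : Finset (Finset α)) : Prop :=
  P.biUnion id = U ∧ ∅ ∉ P ∧
    (∀ B₁ ∈ P, ∀ B₂ ∈ P, B₁ ≠ B₂ → B₁ ∩ B₂ = ∅) ∧
    (∀ B ∈ P, ∑ u ∈ B, w u ≤ c)

theorem stmt_19 {α : Type*} [DecidableEq α]
    (U : Finset α) (hU : U.Nonempty) (w : α → ℝ) (c : ℝ) (hc : 0 < c)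
    (hw : ∀ u ∈ U, 0 < w u ∧ w u ≤ c)
    (P : Finset (Finset α)) (hP : bp U w c P)
    (P₁ : Finset (Finset α))
    (hP₁ne : ∀ B ∈ P₁, B.Nonempty)
    (hP₁U : ∀ B ∈ P₁, B ⊆ U)
    (hP₁disj : ∀ B₁ ∈ P₁, ∀ B₂ ∈ P₁, B₁ ≠ B₂ → B₁ ∩ B₂ = ∅)
    (V' : Finset α) (hV'U : V' ⊆ U) (hV'disj : V' ∩ P₁.biUnion id = ∅)
    (f : Finset α → α) (hf : Set.BijOn f (↑P₁ : Set (Finset α)) (↑V' : Set α))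
    (hover : ∀ B ∈ P₁, c < (∑ u ∈ B, w u) + w (f B)) :
    P₁.card + 1 ≤ P.card := by
  obtain ⟨hPU, hPne, hPdisj, hPle⟩ := hP
  have hPnonempty : P.Nonempty := by
    rcases Finset.eq_empty_or_nonempty P with h | h
    · subst h; simp at hPU; rw [← hPU] at hU; simp at hU
    · exact h
  rcases Finset.eq_empty_or_nonempty P₁ with hP₁e | hP₁nonempty
  · subst hP₁e; simpa using Finset.card_pos.mpr hPnonempty
  -- pairwise disjointness
  have hdisjP₁ : (↑P₁ : Set (Finset α)).PairwiseDisjoint id := by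
    intro B₁ h₁ B₂ h₂ hne
    simpa [Finset.disjoint_iff_inter_eq_empty] using hP₁disj B₁ h₁ B₂ h₂ hne
  have hsum1 : ∑ u ∈ P₁.biUnion id, w u = ∑ B ∈ P₁, ∑ u ∈ B, w u :=
    Finset.sum_biUnion hdisjP₁
  have hsum2 : ∑ u ∈ V', w u = ∑ B ∈ P₁, w (f B) := by
    refine (Finset.sum_nbij (i := f) ?_ ?_ ?_ ?_).symm
    · intro B hB; exact hf.mapsTo (by exact_mod_cast hB)
    · intro B₁ h₁ B₂ h₂ h
      exact hf.injOn (by exact_mod_cast h₁) (by exact_mod_cast h₂) h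
    · intro v hv
      obtain ⟨B, hB, rfl⟩ := hf.surjOn (by exact_mod_cast hv)
      exact ⟨B, by simpa using hB, rfl⟩
    · intros; rfl
  have hdisj : Disjoint (P₁.biUnion id) V' := by
    rw [disjoint_comm, Finset.disjoint_iff_inter_eq_empty]
    exact hV'disj
  have hsub : P₁.biUnion id ∪ V' ⊆ U := by
    apply Finset.union_subset _ hV'U
    intro u hu
    obtain ⟨B, hB, hu⟩ := Finset.mem_biUnion.mp hu
    exact hP₁U B hB hu
  have h1 : c * P₁.card < ∑ u ∈ U, w u := by
    calc c * P₁.card = ∑ _B ∈ P₁, c := by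
          rw [Finset.sum_const, nsmul_eq_mul, mul_comm]
      _ < ∑ B ∈ P₁, ((∑ u ∈ B, w u) + w (f B)) :=
          Finset.sum_lt_sum_of_nonempty hP₁nonempty hover
      _ = ∑ u ∈ P₁.biUnion id ∪ V', w u := by
          rw [Finset.sum_union hdisj, hsum1, hsum2, Finset.sum_add_distrib]
      _ ≤ ∑ u ∈ U, w u := by
          apply Finset.sum_le_sum_of_subset_of_nonneg hsub
          intro u hu _; exact (hw u hu).1.le
  have hdisjP : (↑P : Set (Finset α)).PairwiseDisjoint id := by
    intro B₁ h₁ B₂ h₂ hne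
    simpa [Finset.disjoint_iff_inter_eq_empty] using hPdisj B₁ h₁ B₂ h₂ hne
  have h2 : ∑ u ∈ U, w u ≤ c * P.card := by
    rw [← hPU, Finset.sum_biUnion hdisjP]
    calc ∑ B ∈ P, ∑ u ∈ B, w u ≤ ∑ _B ∈ P, c := Finset.sum_le_sum hPle
      _ = c * P.card := by rw [Finset.sum_const, nsmul_eq_mul, mul_comm]
  have h3 : (P₁.card : ℝ) < P.card := by
    have := h1.trans_le h2
    exact lt_of_mul_lt_mul_left (by linarith [this]) hc.le
  exact_mod_cast Nat.add_one_le_iff.mpr (by exact_mod_cast h3)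
end
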